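/- Let D ⊆ ℝ² be open with t ≠ 0 and t̄ ≠ 0 at every point of D, let α, β ∈ ℂ, and let q̄, r̄ : D → ℂ be C² functions satisfying: (i) ∂²q̄/∂t∂t̄ = 4q̄ + 4q̄r̄·(∂q̄/∂t) and ∂²r̄/∂t∂t̄ = 4r̄ − 4q̄r̄·(∂r̄/∂t); (ii) the similarity conditions t̄·(∂q̄/∂t̄) = t·(∂q̄/∂t) + 2β·q̄ and t̄·(∂r̄/∂t̄) = t·(∂r̄/∂t) − (2β+1)·r̄; (iii) 4q̄r̄ = 2(β − α)/t̄ + (t/t̄)·(∂q̄/∂t)·(∂r̄/∂t). Then on D: ∂²q̄/∂t² = (4t̄/t)·q̄ − ((2α+1)/t)·(∂q̄/∂t) + (∂q̄/∂t)²·(∂r̄/∂t) and ∂²r̄/∂t² = (4t̄/t)·r̄ + (2α/t)·(∂r̄/∂t) − (∂q̄/∂t)·(∂r̄/∂t)². -/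

import Mathlib

noncomputable def pd1 (f : ℝ × ℝ → ℂ) : ℝ × ℝ → ℂ :=
  fun p => fderiv ℝ f p ((1 : ℝ), (0 : ℝ))

noncomputable def pd2 (f : ℝ × ℝ → ℂ) : ℝ × ℝ → ℂ :=
  fun p => fderiv ℝ f p ((0 : ℝ), (1 : ℝ))

lemma deriv_sim (D : Set (ℝ × ℝ)) (hD : IsOpen D) (f : ℝ × ℝ → ℂ)
    (hf : ContDiffOn ℝ 2 f D) (c : ℂ)
    (h : ∀ x ∈ D, (x.2 : ℂ) * pd2 f x = (x.1 : ℂ) * pd1 f x + c * f x)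
    (p : ℝ × ℝ) (hp : p ∈ D) :
    (p.2 : ℂ) * pd1 (pd2 f) p
      = pd1 f p + (p.1 : ℂ) * pd1 (pd1 f) p + c * pd1 f p := by
  have hfa : ContDiffAt ℝ 2 f p := hf.contDiffAt (hD.mem_nhds hp)
  have hfd : ContDiffAt ℝ 1 (fderiv ℝ f) p := hfa.fderiv_right (by norm_num)
  have hd1 : DifferentiableAt ℝ (pd1 f) p :=
    (hfd.clm_apply contDiffAt_const).differentiableAt one_ne_zero
  have hd2 : DifferentiableAt ℝ (pd2 f) p :=
    (hfd.clm_apply contDiffAt_const).differentiableAt one_ne_zero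
  have hdf : DifferentiableAt ℝ f p := hfa.differentiableAt two_ne_zero
  set L1 : ℝ × ℝ →L[ℝ] ℂ := Complex.ofRealCLM.comp (ContinuousLinearMap.fst ℝ ℝ ℝ) with hL1
  set L2 : ℝ × ℝ →L[ℝ] ℂ := Complex.ofRealCLM.comp (ContinuousLinearMap.snd ℝ ℝ ℝ) with hL2
  have hc1 : HasFDerivAt (fun x : ℝ × ℝ => ((x.1 : ℝ) : ℂ)) L1 p := L1.hasFDerivAt
  have hc2 : HasFDerivAt (fun x : ℝ × ℝ => ((x.2 : ℝ) : ℂ)) L2 p := L2.hasFDerivAt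
  have hF : HasFDerivAt (fun x : ℝ × ℝ => ((x.2 : ℝ) : ℂ) * pd2 f x)
      (((p.2 : ℝ) : ℂ) • fderiv ℝ (pd2 f) p + pd2 f p • L2) p :=
    hc2.mul hd2.hasFDerivAt
  have hG : HasFDerivAt (fun x : ℝ × ℝ => ((x.1 : ℝ) : ℂ) * pd1 f x + c * f x)
      ((((p.1 : ℝ) : ℂ) • fderiv ℝ (pd1 f) p + pd1 f p • L1) + c • fderiv ℝ f p) p :=
    (hc1.mul hd1.hasFDerivAt).add (hdf.hasFDerivAt.const_mul c)
  have heq : fderiv ℝ (fun x : ℝ × ℝ => ((x.2 : ℝ) : ℂ) * pd2 f x) p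
      = fderiv ℝ (fun x : ℝ × ℝ => ((x.1 : ℝ) : ℂ) * pd1 f x + c * f x) p :=
    Filter.EventuallyEq.fderiv_eq (Filter.eventually_of_mem (hD.mem_nhds hp) h)
  have hEval : (fderiv ℝ (fun x : ℝ × ℝ => ((x.2 : ℝ) : ℂ) * pd2 f x) p) ((1 : ℝ), (0 : ℝ))
      = (fderiv ℝ (fun x : ℝ × ℝ => ((x.1 : ℝ) : ℂ) * pd1 f x + c * f x) p) ((1 : ℝ), (0 : ℝ)) := by
    rw [heq]
  rw [hF.fderiv, hG.fderiv] at hEval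
  simp only [ContinuousLinearMap.add_apply, ContinuousLinearMap.smul_apply, smul_eq_mul,
    hL1, hL2, ContinuousLinearMap.comp_apply, ContinuousLinearMap.coe_fst',
    ContinuousLinearMap.coe_snd', Complex.ofRealCLM_apply, Complex.ofReal_one,
    Complex.ofReal_zero, mul_zero, mul_one, add_zero] at hEval
  simp only [pd1, pd2] at hEval ⊢
  linear_combination hEval

theorem mPLR_similarity_second_order
    (D : Set (ℝ × ℝ)) (hD : IsOpen D)
    (ht : ∀ p ∈ D, p.1 ≠ 0) (htb : ∀ p ∈ D, p.2 ≠ 0)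
    (α β : ℂ) (qb rb : ℝ × ℝ → ℂ)
    (hqb : ContDiffOn ℝ 2 qb D) (hrb : ContDiffOn ℝ 2 rb D)
    (hpde : ∀ p ∈ D,
      pd1 (pd2 qb) p = 4 * qb p + 4 * qb p * rb p * pd1 qb p ∧
      pd1 (pd2 rb) p = 4 * rb p - 4 * qb p * rb p * pd1 rb p)
    (hsim : ∀ p ∈ D,
      (p.2 : ℂ) * pd2 qb p = (p.1 : ℂ) * pd1 qb p + 2 * β * qb p ∧
      (p.2 : ℂ) * pd2 rb p = (p.1 : ℂ) * pd1 rb p - (2 * β + 1) * rb p)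
    (hconstr : ∀ p ∈ D,
      4 * qb p * rb p
        = 2 * (β - α) / (p.2 : ℂ)
          + ((p.1 : ℂ) / (p.2 : ℂ)) * pd1 qb p * pd1 rb p) :
    ∀ p ∈ D,
      pd1 (pd1 qb) p
        = (4 * (p.2 : ℂ) / (p.1 : ℂ)) * qb p
          - ((2 * α + 1) / (p.1 : ℂ)) * pd1 qb p
          + (pd1 qb p) ^ 2 * pd1 rb p ∧
      pd1 (pd1 rb) p
        = (4 * (p.2 : ℂ) / (p.1 : ℂ)) * rb p
          + (2 * α / (p.1 : ℂ)) * pd1 rb p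
          - pd1 qb p * (pd1 rb p) ^ 2 := by
  intro p hp
  have ht' : ((p.1 : ℝ) : ℂ) ≠ 0 := Complex.ofReal_ne_zero.mpr (ht p hp)
  have htb' : ((p.2 : ℝ) : ℂ) ≠ 0 := Complex.ofReal_ne_zero.mpr (htb p hp)
  have hq := deriv_sim D hD qb hqb (2 * β) (fun x hx => (hsim x hx).1) p hp
  have hr := deriv_sim D hD rb hrb (-(2 * β + 1))
    (fun x hx => by linear_combination (hsim x hx).2) p hp
  have hpq := (hpde p hp).1
  have hpr := (hpde p hp).2
  have hc' : (p.2 : ℂ) * (4 * qb p * rb p)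
      = 2 * (β - α) + (p.1 : ℂ) * pd1 qb p * pd1 rb p := by
    rw [hconstr p hp]; field_simp
  constructor
  · have key : (p.1 : ℂ) * pd1 (pd1 qb) p
        = 4 * (p.2 : ℂ) * qb p - (2 * α + 1) * pd1 qb p
          + (p.1 : ℂ) * (pd1 qb p) ^ 2 * pd1 rb p := by
      linear_combination (p.2 : ℂ) * hpq + pd1 qb p * hc' - hq
    field_simp
    linear_combination key
  · have key : (p.1 : ℂ) * pd1 (pd1 rb) p
        = 4 * (p.2 : ℂ) * rb p + 2 * α * pd1 rb p
          - (p.1 : ℂ) * pd1 qb p * (pd1 rb p) ^ 2 := by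
      linear_combination (p.2 : ℂ) * hpr - pd1 rb p * hc' - hr
    field_simp
    linear_combination key
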